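/- Let W be a standard one-dimensional Brownian motion on a probability space (Ω, 𝓕, ℙ). For h ∈ (0,∞) define a_h := ∫_0^∞ 1_{[0,1)}(⌊u⌋_h)·exp( −1/(1 − ⌊u⌋_h²) ) du − ∫_0^1 exp( −1/(1 − u²) ) du, and for t ∈ [1,∞) define E[X₁(t)] := ∫_1^t exp( −1/(s² − 1) ) ds (the exact mean) and E[Y^h₁(t)] := ∫_1^t 1_{(1,∞)}(⌊s⌋_h)·exp( −1/(⌊s⌋_h² − 1) )·E[ cos( a_h · exp( W(⌊s⌋_h)³ ) ) ] ds (the mean of the first component of the Euler–Maruyama approximation with step size h of the SDE (5.2)). Then E[X₁(t)] − E[Y^h₁(t)] ≥ exp( −14·|ln h|^{2/3} ) for all h ∈ (0, 1/22] and all t ∈ [2,∞); in particular, for every α ∈ (0,∞) and every t ∈ [2,∞), lim_{h↘0} h^{−α}·( E[X₁(t)] − E[Y^h₁(t)] ) = ∞, so the Euler–Maruyama approximations converge in the weak sense slower than any polynomial rate. -/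

import Mathlib

open MeasureTheory ProbabilityTheory
open scoped ENNReal

/-- A standard one-dimensional Brownian motion on a probability space `(Ω, 𝓕, P)`:
a stochastic process `W : [0,∞) × Ω → ℝ` (modelled as `W : ℝ → Ω → ℝ`, relevant only for
nonnegative times) with `W 0 = 0`, P-almost surely continuous sample paths,
independent increments, and `W t - W s` normally distributed with mean `0` and
variance `t - s` for all `0 ≤ s ≤ t`. -/
structure IsStandardBrownianMotion {Ω : Type*} [MeasurableSpace Ω] (P : Measure Ω)
    (W : ℝ → Ω → ℝ) : Prop where
  isProbabilityMeasure : IsProbabilityMeasure P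
  measurable : ∀ t : ℝ, Measurable (W t)
  start : ∀ ω, W 0 ω = 0
  ae_continuous : ∀ᵐ ω ∂P, ContinuousOn (fun t => W t ω) (Set.Ici 0)
  indep_increments : ∀ (n : ℕ) (t : Fin (n + 1) → ℝ), (∀ i, 0 ≤ t i) → Monotone t →
    iIndepFun
      (fun (i : Fin n) (ω : Ω) => W (t i.succ) ω - W (t i.castSucc) ω) P
  gauss_increments : ∀ s t : ℝ, 0 ≤ s → s ≤ t →
    P.map (fun ω => W t ω - W s ω) = gaussianReal 0 (Real.toNNReal (t - s))


open Filter

/-- For `h ∈ (0,∞)` and `t ∈ [0,∞)`, `⌊t⌋_h = max { s ∈ {0, h, 2h, …} : s ≤ t } = h·⌊t/h⌋`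
is the largest grid point of the grid `{0, h, 2h, …}` not exceeding `t`. -/
noncomputable def gridFloor (h t : ℝ) : ℝ := h * ⌊t / h⌋₊

/-- `a_h = ∫_0^∞ 1_{[0,1)}(⌊u⌋_h)·exp(−1/(1−⌊u⌋_h²)) du − ∫_0^1 exp(−1/(1−u²)) du`. -/
noncomputable def eulerDefect (h : ℝ) : ℝ :=
  (∫ u in Set.Ioi (0:ℝ),
      Set.indicator (Set.Ico (0:ℝ) 1) (fun y => Real.exp (-1 / (1 - y ^ 2)))
        (gridFloor h u)) -
    ∫ u in (0:ℝ)..1, Real.exp (-1 / (1 - u ^ 2))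

/-- The mean `E[X₁(t)] = ∫_1^t exp(−1/(s²−1)) ds` of the first component of the exact
solution of the SDE (5.2), started at `0`. -/
noncomputable def meanExactX1 (t : ℝ) : ℝ :=
  ∫ s in (1:ℝ)..t, Real.exp (-1 / (s ^ 2 - 1))

/-- The mean
`E[Y₁^h(t)] = ∫_1^t 1_{(1,∞)}(⌊s⌋_h)·exp(−1/(⌊s⌋_h²−1))·E[cos(a_h·exp(W(⌊s⌋_h)³))] ds`
of the first component of the Euler–Maruyama approximation with step size `h` of the
SDE (5.2), started at `0`. -/
noncomputable def meanEulerY1 {Ω : Type*} [MeasurableSpace Ω] (P : Measure Ω)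
    (W : ℝ → Ω → ℝ) (h t : ℝ) : ℝ :=
  ∫ s in (1:ℝ)..t,
    Set.indicator (Set.Ioi (1:ℝ)) (fun y => Real.exp (-1 / (y ^ 2 - 1)))
        (gridFloor h s) *
      ∫ ω, Real.cos (eulerDefect h * Real.exp ((W (gridFloor h s) ω) ^ 3)) ∂P


open Real Filter
open scoped NNReal

section AuxLemmas


lemma gridFloor_nonneg {h : ℝ} (hh : 0 < h) (t : ℝ) : 0 ≤ gridFloor h t := by
  unfold gridFloor; positivity

lemma gridFloor_le {h t : ℝ} (hh : 0 < h) (ht : 0 ≤ t) : gridFloor h t ≤ t := by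
  have h1 : (⌊t / h⌋₊ : ℝ) ≤ t / h := Nat.floor_le (div_nonneg ht hh.le)
  have := mul_le_mul_of_nonneg_left h1 hh.le
  unfold gridFloor
  calc h * ⌊t / h⌋₊ ≤ h * (t / h) := this
    _ = t := by field_simp

lemma lt_gridFloor_add {h t : ℝ} (hh : 0 < h) : t < gridFloor h t + h := by
  have h1 : t / h < ⌊t / h⌋₊ + 1 := Nat.lt_floor_add_one _
  have := mul_lt_mul_of_pos_left h1 hh
  unfold gridFloor
  have ht : t = h * (t / h) := by field_simp
  nlinarith

lemma gridFloor_eq_of_mem {h t u : ℝ} (hh : 0 < h) (h1 : gridFloor h t ≤ u)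
    (h2 : u < gridFloor h t + h) : gridFloor h u = gridFloor h t := by
  have h0 : 0 ≤ gridFloor h t := gridFloor_nonneg hh t
  have hu0 : 0 ≤ u := le_trans h0 h1
  unfold gridFloor at *
  congr 1
  norm_cast
  rw [Nat.floor_eq_iff (by positivity)]
  constructor
  · rw [le_div_iff₀ hh]; linarith [h1]
  · rw [div_lt_iff₀ hh]; push_cast; linarith [h2]

lemma measurable_comp_gridFloor {h : ℝ} (F : ℝ → ℝ) :
    Measurable (fun t => F (gridFloor h t)) := by
  have : (fun t => F (gridFloor h t)) =
      (fun n : ℕ => F (h * n)) ∘ (fun t : ℝ => ⌊t / h⌋₊) := rfl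
  rw [this]
  exact measurable_from_top.comp (Nat.measurable_floor.comp (measurable_id.div_const h))



lemma exp_three_le : Real.exp 3 ≤ 20.1 := by
  have h : Real.exp 3 = Real.exp 1 ^ (3:ℕ) := by rw [← Real.exp_nat_mul]; norm_num
  rw [h]
  calc Real.exp 1 ^ (3:ℕ) ≤ 2.7182818286 ^ (3:ℕ) :=
        pow_le_pow_left₀ (Real.exp_pos 1).le Real.exp_one_lt_d9.le 3
    _ ≤ 20.1 := by norm_num

lemma exp_two_le : Real.exp 2 ≤ 7.4 := by
  have h : Real.exp 2 = Real.exp 1 ^ (2:ℕ) := by rw [← Real.exp_nat_mul]; norm_num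
  rw [h]
  calc Real.exp 1 ^ (2:ℕ) ≤ 2.7182818286 ^ (2:ℕ) :=
        pow_le_pow_left₀ (Real.exp_pos 1).le Real.exp_one_lt_d9.le 2
    _ ≤ 7.4 := by norm_num

lemma exp_six_ge : (333:ℝ) ≤ Real.exp 6 := by
  have h : Real.exp 6 = Real.exp 1 ^ (6:ℕ) := by rw [← Real.exp_nat_mul]; norm_num
  rw [h]
  calc (333:ℝ) ≤ 2.7182818283 ^ (6:ℕ) := by norm_num
    _ ≤ Real.exp 1 ^ (6:ℕ) := pow_le_pow_left₀ (by norm_num) Real.exp_one_gt_d9.le 6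

lemma exp_eight_ge : (1100:ℝ) ≤ Real.exp 8 := by
  have h : Real.exp 8 = Real.exp 1 ^ (8:ℕ) := by rw [← Real.exp_nat_mul]; norm_num
  rw [h]
  calc (1100:ℝ) ≤ 2.7182818283 ^ (8:ℕ) := by norm_num
    _ ≤ Real.exp 1 ^ (8:ℕ) := pow_le_pow_left₀ (by norm_num) Real.exp_one_gt_d9.le 8

lemma phi_mono {y u : ℝ} (hy : 0 ≤ y) (hyu : y ≤ u) (hu : u < 1) :
    Real.exp (-1 / (1 - u ^ 2)) ≤ Real.exp (-1 / (1 - y ^ 2)) := by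
  apply Real.exp_le_exp.mpr
  have h1 : 0 < 1 - u ^ 2 := by nlinarith
  have h2 : 0 < 1 - y ^ 2 := by nlinarith
  rw [div_le_div_iff₀ h1 h2]
  nlinarith

lemma phi_le {y : ℝ} (hy : 0 ≤ y) (h1 : y < 1) :
    Real.exp (-1 / (1 - y ^ 2)) ≤ 0.37 := by
  have h2 : 0 < 1 - y ^ 2 := by nlinarith
  have h3 : 1 - y ^ 2 ≤ 1 := by nlinarith
  have hle : -1 / (1 - y ^ 2) ≤ -1 := by
    rw [neg_div, neg_le_neg_iff]
    exact (one_le_div h2).mpr h3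
  calc Real.exp (-1 / (1 - y ^ 2)) ≤ Real.exp (-1) := Real.exp_le_exp.mpr hle
    _ ≤ 0.37 := by
        rw [Real.exp_neg, inv_le_comm₀ (Real.exp_pos 1) (by norm_num)]
        nlinarith [Real.exp_one_gt_d9]

lemma phi_gap {y u : ℝ} (hy : 0.45 ≤ y) (hyu : y ≤ u) (hu : u ≤ 0.55) :
    (u - y) / 9 ≤ Real.exp (-1 / (1 - y ^ 2)) - Real.exp (-1 / (1 - u ^ 2)) := by
  have h1 : 0 < 1 - u ^ 2 := by nlinarith
  have h2 : 0 < 1 - y ^ 2 := by nlinarith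
  have huy : 0 ≤ u - y := by linarith
  set A := 1 / (1 - u ^ 2) with hA
  set B := 1 / (1 - y ^ 2) with hB
  have hBA : B ≤ A := by rw [hA, hB, div_le_div_iff₀ h2 h1]; nlinarith
  have hApos : 0 < A := by positivity
  have hA2 : A ≤ 2 := by rw [hA, div_le_iff₀ h1]; nlinarith
  have key : Real.exp (-B) - Real.exp (-A) = Real.exp (-A) * (Real.exp (A - B) - 1) := by
    rw [mul_sub, ← Real.exp_add, mul_one]; ring_nf
  have hgap : 0.9 * (u - y) ≤ A - B := by
    rw [hA, hB, div_sub_div _ _ (ne_of_gt h1) (ne_of_gt h2), le_div_iff₀ (by positivity)]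
    have hp : (1 - u ^ 2) * (1 - y ^ 2) ≤ 1 := by nlinarith
    have h9 : 0.9 ≤ u + y := by linarith
    nlinarith [mul_le_mul_of_nonneg_left hp (mul_nonneg (by norm_num : (0:ℝ) ≤ 0.9) huy),
      mul_le_mul_of_nonneg_right h9 huy]
  have hexpA : (0.135:ℝ) ≤ Real.exp (-A) := by
    have hA' : Real.exp (-2) ≤ Real.exp (-A) := Real.exp_le_exp.mpr (by linarith)
    have he : Real.exp (-2) = (Real.exp 2)⁻¹ := Real.exp_neg 2
    have h5 : (7.4:ℝ)⁻¹ ≤ (Real.exp 2)⁻¹ := inv_anti₀ (Real.exp_pos 2) exp_two_le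
    have h6 : (0.135:ℝ) ≤ (7.4:ℝ)⁻¹ := by norm_num
    linarith [he ▸ hA']
  have hgap2 : 0.9 * (u - y) ≤ Real.exp (A - B) - 1 := by
    nlinarith [Real.add_one_le_exp (A - B)]
  rw [neg_div, neg_div]
  rw [key]
  calc (u - y) / 9 ≤ 0.135 * (0.9 * (u - y)) := by nlinarith
    _ ≤ Real.exp (-A) * (Real.exp (A - B) - 1) :=
        mul_le_mul hexpA hgap2 (by positivity) (Real.exp_pos _).le



lemma measurable_phi : Measurable (fun y : ℝ => Real.exp (-1 / (1 - y ^ 2))) :=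
  Real.measurable_exp.comp (measurable_const.div (measurable_const.sub (measurable_id.pow_const 2)))

lemma eulerDefect_bounds {h : ℝ} (h0 : 0 < h) (h22 : h ≤ 1/22) :
    h ^ 2 / 100 ≤ eulerDefect h ∧ eulerDefect h ≤ 2/5 := by
  set φ : ℝ → ℝ := fun y => Real.exp (-1 / (1 - y ^ 2)) with hφdef
  set ψ : ℝ → ℝ := fun u => Set.indicator (Set.Ico (0:ℝ) 1) φ (gridFloor h u) with hψdef
  have hψ_meas : Measurable ψ := measurable_comp_gridFloor _
  have hψ_nonneg : ∀ u, 0 ≤ ψ u := fun u =>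
    Set.indicator_nonneg (fun y _ => (Real.exp_pos _).le) _
  -- the dominating function
  set g : ℝ → ℝ := Set.indicator (Set.Icc (0:ℝ) (1+h)) (fun _ => (0.37:ℝ)) with hgdef
  have hg_int : Integrable g (volume.restrict (Set.Ioi (0:ℝ))) := by
    rw [hgdef, integrable_indicator_iff measurableSet_Icc]
    refine integrableOn_const (ne_of_lt ?_)
    exact lt_of_le_of_lt (Measure.restrict_apply_le _ _) measure_Icc_lt_top
  have hdom : ∀ u ∈ Set.Ioi (0:ℝ), ψ u ≤ g u := by
    intro u hu
    by_cases hgf : gridFloor h u ∈ Set.Ico (0:ℝ) 1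
    · rw [hψdef]
      simp only [Set.indicator_of_mem hgf]
      have hu1 : u < 1 + h := by
        have := lt_gridFloor_add (t := u) h0
        have := hgf.2
        linarith
      have hmem : u ∈ Set.Icc (0:ℝ) (1+h) := ⟨le_of_lt hu, hu1.le⟩
      rw [hgdef]
      simp only [Set.indicator_of_mem hmem]
      exact phi_le hgf.1 hgf.2
    · rw [hψdef]
      simp only [Set.indicator_of_notMem hgf]
      exact Set.indicator_nonneg (fun y _ => by norm_num) _
  have hψ_int : IntegrableOn ψ (Set.Ioi (0:ℝ)) := by
    refine Integrable.mono' hg_int hψ_meas.aestronglyMeasurable ?_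
    refine (ae_restrict_iff' measurableSet_Ioi).mpr (ae_of_all _ fun u hu => ?_)
    rw [Real.norm_eq_abs, abs_of_nonneg (hψ_nonneg u)]
    exact hdom u hu
  have hφ_int : IntegrableOn φ (Set.Ioo (0:ℝ) 1) := by
    have hconst : IntegrableOn (fun _ : ℝ => (0.37:ℝ)) (Set.Ioo (0:ℝ) 1) :=
      integrableOn_const measure_Ioo_lt_top.ne
    refine Integrable.mono' hconst measurable_phi.aestronglyMeasurable ?_
    refine (ae_restrict_iff' measurableSet_Ioo).mpr (ae_of_all _ fun u hu => ?_)
    rw [Real.norm_eq_abs, abs_of_nonneg (Real.exp_pos _).le]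
    exact phi_le hu.1.le hu.2
  have hψ_int_Ioo : IntegrableOn ψ (Set.Ioo (0:ℝ) 1) :=
    hψ_int.mono_set Set.Ioo_subset_Ioi_self
  -- I2 as set integral over Ioo
  have hI2 : (∫ u in (0:ℝ)..1, φ u) = ∫ u in Set.Ioo (0:ℝ) 1, φ u := by
    rw [intervalIntegral.integral_of_le zero_le_one]
    exact (setIntegral_congr_set Ioo_ae_eq_Ioc).symm
  constructor
  · -- lower bound
    set m := gridFloor h (1/2) with hm
    have hm0 : 0 ≤ m := gridFloor_nonneg h0 _
    have hm_le : m ≤ 1/2 := gridFloor_le h0 (by norm_num)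
    have hm_gt : 0.45 ≤ m := by
      have := lt_gridFloor_add (t := (1:ℝ)/2) h0
      linarith
    have hJ : Set.Icc m (m + h/2) ⊆ Set.Ioo (0:ℝ) 1 := by
      intro u hu
      constructor
      · linarith [hu.1]
      · have := hu.2; nlinarith
    have hpoint : ∀ u ∈ Set.Icc m (m + h/2), (u - m)/9 ≤ ψ u - φ u := by
      intro u hu
      have hgf : gridFloor h u = m :=
        gridFloor_eq_of_mem h0 hu.1 (by linarith [hu.2])
      have hmem : m ∈ Set.Ico (0:ℝ) 1 := ⟨hm0, by linarith⟩
      have hψu : ψ u = φ m := by rw [hψdef]; simp only [hgf, Set.indicator_of_mem hmem]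
      rw [hψu]
      exact phi_gap hm_gt hu.1 (by linarith [hu.2])
    have hsub_int : IntegrableOn (fun u => ψ u - φ u) (Set.Ioo (0:ℝ) 1) :=
      hψ_int_Ioo.sub hφ_int
    have hstep1 : (∫ u in Set.Ioo (0:ℝ) 1, ψ u) ≤ ∫ u in Set.Ioi (0:ℝ), ψ u := by
      refine setIntegral_mono_set hψ_int ?_ (HasSubset.Subset.eventuallyLE Set.Ioo_subset_Ioi_self)
      exact (ae_restrict_iff' measurableSet_Ioi).mpr (ae_of_all _ fun u _ => hψ_nonneg u)
    have hstep2 : (∫ u in Set.Icc m (m + h/2), (ψ u - φ u)) ≤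
        ∫ u in Set.Ioo (0:ℝ) 1, (ψ u - φ u) := by
      refine setIntegral_mono_set hsub_int ?_ (HasSubset.Subset.eventuallyLE hJ)
      refine (ae_restrict_iff' measurableSet_Ioo).mpr (ae_of_all _ fun u hu => ?_)
      have hgf0 : 0 ≤ gridFloor h u := gridFloor_nonneg h0 u
      have hgfu : gridFloor h u ≤ u := gridFloor_le h0 hu.1.le
      have : φ u ≤ φ (gridFloor h u) := phi_mono hgf0 hgfu hu.2
      have hmem : gridFloor h u ∈ Set.Ico (0:ℝ) 1 := ⟨hgf0, lt_of_le_of_lt hgfu hu.2⟩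
      have hψu : ψ u = φ (gridFloor h u) := by
        rw [hψdef]; simp only [Set.indicator_of_mem hmem]
      simp only [Pi.zero_apply]
      show (0:ℝ) ≤ ψ u - φ u
      rw [hψu]; linarith
    have hstep3 : (∫ u in Set.Icc m (m + h/2), (u - m)/9) ≤
        ∫ u in Set.Icc m (m + h/2), (ψ u - φ u) := by
      refine setIntegral_mono_on ?_ (hsub_int.mono_set hJ) measurableSet_Icc hpoint
      exact (continuous_id.sub continuous_const).div_const 9 |>.integrableOn_Icc
    have hcomp : (∫ u in Set.Icc m (m + h/2), (u - m)/9) = h^2/72 := by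
      have hle : m ≤ m + h/2 := by linarith
      rw [← Measure.restrict_congr_set Ioc_ae_eq_Icc,
        ← intervalIntegral.integral_of_le hle]
      have : ∀ u : ℝ, (u - m)/9 = (1/9) * u + (-(m/9)) := fun u => by ring
      rw [intervalIntegral.integral_congr (fun u _ => this u)]
      rw [intervalIntegral.integral_add ((intervalIntegral.intervalIntegrable_id).const_mul _)
        (intervalIntegrable_const)]
      rw [intervalIntegral.integral_const_mul, integral_id,
        intervalIntegral.integral_const]
      simp only [smul_eq_mul]
      ring
    have hI1ge : (∫ u in Set.Ioo (0:ℝ) 1, ψ u) - (∫ u in Set.Ioo (0:ℝ) 1, φ u) ≥ h^2/72 := by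
      rw [← integral_sub hψ_int_Ioo hφ_int]
      calc h^2/72 = ∫ u in Set.Icc m (m + h/2), (u - m)/9 := hcomp.symm
        _ ≤ _ := hstep3.trans hstep2
    have : eulerDefect h = (∫ u in Set.Ioi (0:ℝ), ψ u) - ∫ u in (0:ℝ)..1, φ u := rfl
    rw [this, hI2]
    nlinarith [hstep1, hI1ge]
  · -- upper bound
    have hI1le : (∫ u in Set.Ioi (0:ℝ), ψ u) ≤ 0.37 * (1 + h) := by
      have hmono : (∫ u in Set.Ioi (0:ℝ), ψ u) ≤ ∫ u in Set.Ioi (0:ℝ), g u := by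
        refine integral_mono_ae hψ_int hg_int ?_
        exact (ae_restrict_iff' measurableSet_Ioi).mpr (ae_of_all _ hdom)
      have hgval : (∫ u in Set.Ioi (0:ℝ), g u) = 0.37 * (1 + h) := by
        rw [hgdef, integral_indicator measurableSet_Icc, Measure.restrict_restrict measurableSet_Icc]
        have hset : Set.Icc (0:ℝ) (1+h) ∩ Set.Ioi 0 = Set.Ioc (0:ℝ) (1+h) := by
          ext x
          simp only [Set.mem_inter_iff, Set.mem_Icc, Set.mem_Ioi, Set.mem_Ioc]
          constructor
          · rintro ⟨⟨_, hb⟩, hc⟩; exact ⟨hc, hb⟩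
          · rintro ⟨ha, hb⟩; exact ⟨⟨ha.le, hb⟩, ha⟩
        rw [hset, setIntegral_const, measureReal_def, Real.volume_Ioc, ENNReal.toReal_ofReal (by linarith),
          smul_eq_mul]
        ring
      linarith
    have hI2ge : (0:ℝ) ≤ ∫ u in (0:ℝ)..1, φ u :=
      intervalIntegral.integral_nonneg zero_le_one (fun u _ => (Real.exp_pos _).le)
    have : eulerDefect h = (∫ u in Set.Ioi (0:ℝ), ψ u) - ∫ u in (0:ℝ)..1, φ u := rfl
    rw [this]
    nlinarith



lemma aux_mul_div {a c : ℝ} (ha : a ≠ 0) : a * (c/(2*a)) = c/2 := by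
  field_simp

lemma aux_div_div {x y a : ℝ} (ha : a ≠ 0) (hy : y ≠ 0) (hπ : π ≠ 0) :
    (x*π/(2*a))/(y*π/(2*a)) = x/y := by
  field_simp

set_option maxHeartbeats 1000000 in
lemma one_sub_cos_bound {Ω : Type*} [MeasurableSpace Ω] (P : Measure Ω) (W : ℝ → Ω → ℝ)
    (hW : IsStandardBrownianMotion P W) {τ a : ℝ} (hτ1 : 1 ≤ τ) (hτ2 : τ ≤ 2)
    (ha0 : 0 < a) (ha : a ≤ 2/5) :
    (2/7) / (3 * (Real.log (7*π/(2*a)) ^ ((1:ℝ)/3)) ^ 2) * ((Real.sqrt (4*π))⁻¹ *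
      Real.exp (-((Real.log (7*π/(2*a)) ^ ((1:ℝ)/3)) ^ 2) / 2))
      ≤ 1 - ∫ ω, Real.cos (a * Real.exp ((W τ ω) ^ 3)) ∂P := by
  haveI := hW.isProbabilityMeasure
  have hπ1 : (3.14:ℝ) ≤ π := by linarith [Real.pi_gt_d6]
  have hπ2 : π ≤ 3.15 := Real.pi_lt_d2.le
  set L := Real.log (7*π/(2*a)) with hLdef
  set M := Real.log (5*π/(2*a)) with hMdef
  have h7a : 0 < 7*π/(2*a) := by positivity
  have h5a : 0 < 5*π/(2*a) := by positivity
  have hL3 : 3 ≤ L := by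
    rw [hLdef, Real.le_log_iff_exp_le h7a]
    calc Real.exp 3 ≤ 20.1 := exp_three_le
      _ ≤ 7*π/(2*a) := by
          rw [le_div_iff₀ (by positivity)]
          nlinarith
  have hM2 : 2 ≤ M := by
    rw [hMdef, Real.le_log_iff_exp_le h5a]
    calc Real.exp 2 ≤ 7.4 := exp_two_le
      _ ≤ 5*π/(2*a) := by
          rw [le_div_iff₀ (by positivity)]
          nlinarith
  have hML : M ≤ L := Real.log_le_log h5a (by
    apply div_le_div_of_nonneg_right ?_ (by positivity)
    · nlinarith
    )
  set β := L ^ ((1:ℝ)/3) with hβdef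
  set γ := M ^ ((1:ℝ)/3) with hγdef
  have hL0 : (0:ℝ) ≤ L := by linarith
  have hM0 : (0:ℝ) ≤ M := by linarith
  have hβ3 : β ^ (3:ℕ) = L := by
    rw [hβdef, ← Real.rpow_natCast (L ^ ((1:ℝ)/3)) 3, ← Real.rpow_mul hL0]
    norm_num
  have hγ3 : γ ^ (3:ℕ) = M := by
    rw [hγdef, ← Real.rpow_natCast (M ^ ((1:ℝ)/3)) 3, ← Real.rpow_mul hM0]
    norm_num
  have hβ1 : 1 ≤ β := by
    have : (1:ℝ) = (1:ℝ) ^ ((1:ℝ)/3) := by simp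
    rw [this, hβdef]
    exact Real.rpow_le_rpow (by norm_num) (by linarith) (by norm_num)
  have hγ1 : 1 ≤ γ := by
    have : (1:ℝ) = (1:ℝ) ^ ((1:ℝ)/3) := by simp
    rw [this, hγdef]
    exact Real.rpow_le_rpow (by norm_num) (by linarith) (by norm_num)
  have hγβ : γ ≤ β := Real.rpow_le_rpow hM0 hML (by norm_num)
  -- the law of W τ
  set v : ℝ≥0 := Real.toNNReal τ with hvdef
  have hv : v ≠ 0 := by
    rw [hvdef]
    simp only [ne_eq, Real.toNNReal_eq_zero, not_le]
    linarith
  have hvτ : (v:ℝ) = τ := Real.coe_toNNReal _ (by linarith)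
  have hmap : P.map (W τ) = gaussianReal 0 v := by
    have h := hW.gauss_increments 0 τ le_rfl (by linarith)
    have heq : (fun ω => W τ ω - W 0 ω) = W τ := funext fun ω => by
      rw [hW.start, sub_zero]
    rw [heq] at h
    simpa using h
  set A : Set Ω := (W τ) ⁻¹' (Set.Icc γ β) with hAdef
  have hA_meas : MeasurableSet A := (hW.measurable τ) measurableSet_Icc
  have hPA : P A = gaussianReal 0 v (Set.Icc γ β) := by
    rw [← hmap, Measure.map_apply (hW.measurable τ) measurableSet_Icc]
  set c : ℝ := (Real.sqrt (4*π))⁻¹ * Real.exp (-(β^2) / 2) with hcdef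
  have hc0 : 0 < c := by positivity
  have hpdf : ∀ x ∈ Set.Icc γ β, c ≤ gaussianPDFReal 0 v x := by
    intro x hx
    rw [gaussianPDFReal]
    have hx0 : 0 ≤ x := le_trans (by linarith) hx.1
    have hxβ : x ≤ β := hx.2
    have h2v : (2:ℝ) ≤ 2 * v := by rw [hvτ]; linarith
    have hsq : x^2 ≤ β^2 := by nlinarith
    have part1 : (Real.sqrt (4*π))⁻¹ ≤ (Real.sqrt (2*π*v))⁻¹ := by
      apply inv_anti₀
      · apply Real.sqrt_pos.mpr; rw [hvτ]; positivity
      · apply Real.sqrt_le_sqrt; rw [hvτ]; nlinarith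
    have part2 : Real.exp (-(β^2) / 2) ≤ Real.exp (-(x - 0)^2 / (2*v)) := by
      apply Real.exp_le_exp.mpr
      rw [sub_zero, neg_div, neg_div, neg_le_neg_iff]
      calc x^2 / (2*v) ≤ x^2 / 2 :=
            div_le_div_of_nonneg_left (by positivity) (by norm_num) h2v
        _ ≤ β^2 / 2 := by linarith [hsq]
    calc c ≤ (Real.sqrt (2*π*v))⁻¹ * Real.exp (-(x-0)^2 / (2*v)) := by
          rw [hcdef]
          exact mul_le_mul part1 part2 (Real.exp_pos _).le (by positivity)
      _ = gaussianPDFReal 0 v x := by rw [gaussianPDFReal]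
  have hint_pdf : IntegrableOn (gaussianPDFReal 0 v) (Set.Icc γ β) :=
    (integrable_gaussianPDFReal 0 v).integrableOn
  have hvol : (volume (Set.Icc γ β)).toReal = β - γ := by
    rw [Real.volume_Icc, ENNReal.toReal_ofReal (by linarith)]
  have hJ : c * (β - γ) ≤ ∫ x in Set.Icc γ β, gaussianPDFReal 0 v x := by
    have := setIntegral_ge_of_const_le measurableSet_Icc
      (by rw [Real.volume_Icc]; exact ENNReal.ofReal_ne_top) hpdf hint_pdf
    rwa [measureReal_def, hvol, smul_eq_mul, mul_comm] at this
  have hgauss : gaussianReal 0 v (Set.Icc γ β) =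
      ENNReal.ofReal (∫ x in Set.Icc γ β, gaussianPDFReal 0 v x) :=
    gaussianReal_apply_eq_integral 0 hv _
  have hPA_real : c * (β - γ) ≤ (P A).toReal := by
    rw [← ENNReal.ofReal_le_iff_le_toReal (measure_ne_top P A), hPA, hgauss]
    exact ENNReal.ofReal_le_ofReal hJ
  have hcosA : ∀ ω ∈ A, Real.cos (a * Real.exp ((W τ ω)^3)) ≤ 0 := by
    intro ω hω
    have hx : W τ ω ∈ Set.Icc γ β := hω
    set x := W τ ω with hxdef
    have hx0 : 0 ≤ x := le_trans (by linarith) hx.1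
    have h3l : M ≤ x^3 := by rw [← hγ3]; exact pow_le_pow_left₀ (by linarith) hx.1 3
    have h3u : x^3 ≤ L := by rw [← hβ3]; exact pow_le_pow_left₀ hx0 hx.2 3
    have hexpM : Real.exp M = 5*π/(2*a) := Real.exp_log h5a
    have hexpL : Real.exp L = 7*π/(2*a) := Real.exp_log h7a
    have hml : Real.exp M ≤ Real.exp (x^3) := Real.exp_le_exp.mpr h3l
    have hmu : Real.exp (x^3) ≤ Real.exp L := Real.exp_le_exp.mpr h3u
    have hθl : 5*π/2 ≤ a * Real.exp (x^3) := by
      rw [hexpM] at hml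
      have h2 := mul_le_mul_of_nonneg_left hml ha0.le
      rwa [aux_mul_div (ne_of_gt ha0)] at h2
    have hθu : a * Real.exp (x^3) ≤ 7*π/2 := by
      rw [hexpL] at hmu
      have h2 := mul_le_mul_of_nonneg_left hmu ha0.le
      rwa [aux_mul_div (ne_of_gt ha0)] at h2
    rw [← Real.cos_sub_two_pi]
    apply Real.cos_nonpos_of_pi_div_two_le_of_le
    · linarith
    · linarith
  have hmeas_cos : Measurable fun ω => Real.cos (a * Real.exp ((W τ ω)^3)) :=
    Real.measurable_cos.comp (measurable_const.mul
      (Real.measurable_exp.comp ((hW.measurable τ).pow_const 3)))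
  have hint_cos : Integrable (fun ω => Real.cos (a * Real.exp ((W τ ω)^3))) P := by
    refine Integrable.mono' (integrable_const 1) hmeas_cos.aestronglyMeasurable
      (ae_of_all _ fun ω => ?_)
    rw [Real.norm_eq_abs]; exact Real.abs_cos_le_one _
  have hint_ind : Integrable (A.indicator fun _ => (1:ℝ)) P :=
    (integrable_const 1).indicator hA_meas
  have hle : ∀ ω, Real.cos (a * Real.exp ((W τ ω)^3)) ≤ 1 - A.indicator (fun _ => (1:ℝ)) ω := by
    intro ω
    by_cases hω : ω ∈ A
    · rw [Set.indicator_of_mem hω]; simpa using hcosA ω hω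
    · rw [Set.indicator_of_notMem hω]; simpa using Real.cos_le_one (a * Real.exp ((W τ ω)^3))
  have hMean : (∫ ω, Real.cos (a * Real.exp ((W τ ω)^3)) ∂P) ≤ 1 - (P A).toReal := by
    calc (∫ ω, Real.cos (a * Real.exp ((W τ ω)^3)) ∂P)
        ≤ ∫ ω, (1 - A.indicator (fun _ => (1:ℝ)) ω) ∂P :=
          integral_mono hint_cos ((integrable_const 1).sub hint_ind) hle
      _ = 1 - (P A).toReal := by
          rw [integral_sub (integrable_const 1) hint_ind, integral_const,
            integral_indicator_const (1:ℝ) hA_meas]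
          simp [measure_univ, measureReal_def]
  have hβ2 : (0:ℝ) < 3 * β^2 := by nlinarith
  have hβα : (2/7) / (3*β^2) ≤ β - γ := by
    have hLM : (2:ℝ)/7 ≤ L - M := by
      have hdiv : Real.log ((7*π/(2*a)) / (5*π/(2*a))) = L - M :=
        Real.log_div (ne_of_gt h7a) (ne_of_gt h5a)
      have hq : (7*π/(2*a)) / (5*π/(2*a)) = 7/5 :=
        aux_div_div (ne_of_gt ha0) (by norm_num) (ne_of_gt Real.pi_pos)
      have h75 : (2:ℝ)/7 ≤ Real.log (7/5) := by
        have hlog := Real.log_le_sub_one_of_pos (show (0:ℝ) < 5/7 by norm_num)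
        have hinv : Real.log ((7:ℝ)/5) = - Real.log (5/7) := by
          rw [← Real.log_inv]; norm_num
        rw [hinv]; linarith
      rw [← hdiv, hq]; exact h75
    have hd : (0:ℝ) ≤ β - γ := by linarith
    have hkey : β^3 - γ^3 ≤ (β - γ) * (3*β^2) := by
      nlinarith [mul_nonneg (mul_nonneg hd hd) (by linarith : (0:ℝ) ≤ 2*β + γ)]
    rw [div_le_iff₀ hβ2]
    have : (2:ℝ)/7 ≤ β^3 - γ^3 := by rw [hβ3, hγ3]; linarith
    linarith
  calc (2/7) / (3*β^2) * c ≤ (β - γ) * c := mul_le_mul_of_nonneg_right hβα hc0.le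
    _ = c * (β - γ) := mul_comm _ _
    _ ≤ (P A).toReal := hPA_real
    _ ≤ 1 - ∫ ω, Real.cos (a * Real.exp ((W τ ω)^3)) ∂P := by linarith [hMean]



lemma exp_six_ge' : (400:ℝ) ≤ Real.exp 6 := by
  have h : Real.exp 6 = Real.exp 1 ^ (6:ℕ) := by rw [← Real.exp_nat_mul]; norm_num
  rw [h]
  calc (400:ℝ) ≤ 2.7182818283 ^ (6:ℕ) := by norm_num
    _ ≤ Real.exp 1 ^ (6:ℕ) := pow_le_pow_left₀ (by norm_num) Real.exp_one_gt_d9.le 6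

lemma exp_eight_ge' : (1100:ℝ) ≤ Real.exp 8 := by
  have h : Real.exp 8 = Real.exp 1 ^ (8:ℕ) := by rw [← Real.exp_nat_mul]; norm_num
  rw [h]
  calc (1100:ℝ) ≤ 2.7182818283 ^ (8:ℕ) := by norm_num
    _ ≤ Real.exp 1 ^ (8:ℕ) := pow_le_pow_left₀ (by norm_num) Real.exp_one_gt_d9.le 8

lemma rpow_twothirds_add_le {x y : ℝ} (hx : 0 ≤ x) (hy : 0 ≤ y) :
    (x + y) ^ ((2:ℝ)/3) ≤ x ^ ((2:ℝ)/3) + y ^ ((2:ℝ)/3) := by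
  have h := NNReal.rpow_add_le_add_rpow (Real.toNNReal x) (Real.toNNReal y)
    (by norm_num : (0:ℝ) ≤ 2/3) (by norm_num : (2:ℝ)/3 ≤ 1)
  have h2 := NNReal.coe_le_coe.2 h
  push_cast [Real.coe_toNNReal x hx, Real.coe_toNNReal y hy] at h2
  exact h2

lemma twothirds_pow_two_le : (2:ℝ) ^ ((2:ℝ)/3) ≤ 1.588 := by
  set d := (2:ℝ) ^ ((2:ℝ)/3) with hd
  have hd0 : 0 ≤ d := Real.rpow_nonneg (by norm_num) _
  have hd3 : d ^ (3:ℕ) = 4 := by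
    rw [hd, ← Real.rpow_natCast ((2:ℝ) ^ ((2:ℝ)/3)) 3, ← Real.rpow_mul (by norm_num)]
    norm_num
  by_contra hlt
  push_neg at hlt
  have : (1.588:ℝ)^(3:ℕ) < d^(3:ℕ) := pow_lt_pow_left₀ hlt (by norm_num) (by norm_num)
  rw [hd3] at this
  norm_num at this

lemma eight_pow_twothirds : (8:ℝ) ^ ((2:ℝ)/3) = 4 := by
  rw [show (8:ℝ) = (2:ℝ)^(3:ℕ) by norm_num, ← Real.rpow_natCast (2:ℝ) 3,
    ← Real.rpow_mul (by norm_num)]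
  norm_num

lemma three_pow_twothirds_ge : (2.08:ℝ) ≤ (3:ℝ) ^ ((2:ℝ)/3) := by
  set d := (3:ℝ) ^ ((2:ℝ)/3) with hd
  have hd0 : 0 ≤ d := Real.rpow_nonneg (by norm_num) _
  have hd3 : d ^ (3:ℕ) = 9 := by
    rw [hd, ← Real.rpow_natCast ((3:ℝ) ^ ((2:ℝ)/3)) 3, ← Real.rpow_mul (by norm_num)]
    norm_num
  by_contra hlt
  push_neg at hlt
  have : d^(3:ℕ) < (2.08:ℝ)^(3:ℕ) := pow_lt_pow_left₀ hlt hd0 (by norm_num)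
  rw [hd3] at this
  norm_num at this

set_option maxHeartbeats 1600000 in
lemma final_numeric {h a : ℝ} (h0 : 0 < h) (h22 : h ≤ 1/22)
    (halb : h^2/100 ≤ a) (haub : a ≤ 2/5) :
    Real.exp (-14 * |Real.log h| ^ ((2:ℝ)/3)) ≤
      0.4 * (0.28 * ((2/7) / (3 * (Real.log (7*π/(2*a)) ^ ((1:ℝ)/3)) ^ 2) *
        ((Real.sqrt (4*π))⁻¹ *
          Real.exp (-((Real.log (7*π/(2*a)) ^ ((1:ℝ)/3)) ^ 2) / 2)))) := by
  have ha0 : 0 < a := lt_of_lt_of_le (by positivity) halb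
  have hπ1 : (3.14:ℝ) ≤ π := by linarith [Real.pi_gt_d6]
  have hπ2 : π ≤ 3.141593 := by linarith [Real.pi_lt_d6]
  have hlogneg : Real.log h < 0 := Real.log_neg h0 (by linarith)
  have habs : |Real.log h| = - Real.log h := abs_of_neg hlogneg
  set X : ℝ := - Real.log h with hXdef
  have hX3 : 3 ≤ X := by
    rw [hXdef, le_neg]
    have hh3 : h ≤ Real.exp (-3) := by
      rw [Real.exp_neg]
      have h1 : (20.1:ℝ)⁻¹ ≤ (Real.exp 3)⁻¹ := inv_anti₀ (Real.exp_pos 3) exp_three_le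
      have : h ≤ (20.1:ℝ)⁻¹ := by norm_num at *; linarith
      linarith
    calc Real.log h ≤ Real.log (Real.exp (-3)) := Real.log_le_log h0 hh3
      _ = -3 := Real.log_exp _
  set X23 : ℝ := X ^ ((2:ℝ)/3) with hX23def
  have hX23ge : 2.08 ≤ X23 := by
    calc (2.08:ℝ) ≤ (3:ℝ) ^ ((2:ℝ)/3) := three_pow_twothirds_ge
      _ ≤ X ^ ((2:ℝ)/3) := Real.rpow_le_rpow (by norm_num) hX3 (by norm_num)
  set L := Real.log (7*π/(2*a)) with hLdef
  have h7a : 0 < 7*π/(2*a) := by positivity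
  have hL3 : 3 ≤ L := by
    rw [hLdef, Real.le_log_iff_exp_le h7a]
    calc Real.exp 3 ≤ 20.1 := exp_three_le
      _ ≤ 7*π/(2*a) := by rw [le_div_iff₀ (by positivity)]; nlinarith
  have hL0 : (0:ℝ) ≤ L := by linarith
  have hLub : L ≤ 2*X + 8 := by
    have hstep : 7*π/(2*a) ≤ 350*π/h^2 := by
      rw [div_le_div_iff₀ (by positivity) (by positivity)]
      nlinarith [Real.pi_pos]
    have hlog1 : L ≤ Real.log (350*π/h^2) := by
      rw [hLdef]
      exact Real.log_le_log h7a hstep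
    have hlog2 : Real.log (350*π/h^2) = Real.log (350*π) - 2 * Real.log h := by
      rw [Real.log_div (by positivity) (by positivity), Real.log_pow]
      push_cast; ring
    have hlog3 : Real.log (350*π) ≤ 8 := by
      rw [Real.log_le_iff_le_exp (by positivity)]
      calc 350*π ≤ 350*3.141593 := by linarith
        _ ≤ 1100 := by norm_num
        _ ≤ Real.exp 8 := exp_eight_ge'
    rw [hlog2] at hlog1
    rw [hXdef]
    linarith
  set β := L ^ ((1:ℝ)/3) with hβdef
  have hβ2eq : β^(2:ℕ) = L ^ ((2:ℝ)/3) := by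
    rw [hβdef, ← Real.rpow_natCast (L ^ ((1:ℝ)/3)) 2, ← Real.rpow_mul hL0]
    norm_num
  have hβ1 : 1 ≤ β := by
    have h1 : (1:ℝ) = (1:ℝ) ^ ((1:ℝ)/3) := by simp
    rw [h1, hβdef]
    exact Real.rpow_le_rpow (by norm_num) (by linarith) (by norm_num)
  have hβ2pos : (0:ℝ) < β^2 := by nlinarith
  have hβ2ub : β^2 ≤ 1.588 * X23 + 4 := by
    have h1 : L ^ ((2:ℝ)/3) ≤ (2*X + 8) ^ ((2:ℝ)/3) :=
      Real.rpow_le_rpow hL0 hLub (by norm_num)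
    have h2 : (2*X + 8) ^ ((2:ℝ)/3) ≤ (2*X) ^ ((2:ℝ)/3) + (8:ℝ) ^ ((2:ℝ)/3) :=
      rpow_twothirds_add_le (by linarith) (by norm_num)
    have h3 : (2*X) ^ ((2:ℝ)/3) = (2:ℝ)^((2:ℝ)/3) * X23 := by
      rw [hX23def, ← Real.mul_rpow (by norm_num) (by linarith)]
    have h4 : (2:ℝ)^((2:ℝ)/3) * X23 ≤ 1.588 * X23 := by
      apply mul_le_mul_of_nonneg_right twothirds_pow_two_le (by linarith)
    rw [eight_pow_twothirds] at h2
    calc β^2 = L ^ ((2:ℝ)/3) := hβ2eq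
      _ ≤ (2*X) ^ ((2:ℝ)/3) + 4 := by linarith
      _ ≤ 1.588 * X23 + 4 := by rw [h3]; linarith
  -- exponent comparison
  have hexp_cmp : -14 * X23 ≤ -(β^2) - 6 := by nlinarith
  set E := Real.exp (-(β^2) / 2) with hEdef
  have hE0 : 0 < E := Real.exp_pos _
  have hEt : E * β^2 ≤ 1 := by
    have h1 := Real.add_one_le_exp (β^2/4)
    have h2 : Real.exp (β^2/2) = Real.exp (β^2/4) * Real.exp (β^2/4) := by
      rw [← Real.exp_add]; ring_nf
    have h3 : β^2 ≤ Real.exp (β^2/2) := by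
      nlinarith [sq_nonneg (β^2/4 - 1), (Real.exp_pos (β^2/4)).le]
    have h4 : E * Real.exp (β^2/2) = 1 := by
      rw [hEdef, ← Real.exp_add, show -(β^2)/2 + β^2/2 = 0 by ring, Real.exp_zero]
    nlinarith
  have hEβ : E ≤ 1/β^2 := by
    rw [le_div_iff₀ hβ2pos]; linarith
  set s := Real.sqrt (4*π) with hsdef
  have hs0 : 0 < s := Real.sqrt_pos.mpr (by positivity)
  have hsub : s ≤ 3.55 := by
    rw [hsdef, show (3.55:ℝ) = Real.sqrt (3.55^2) from (Real.sqrt_sq (by norm_num)).symm]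
    apply Real.sqrt_le_sqrt; nlinarith
  have hsinv : (1:ℝ)/400 ≤ (4/375) * s⁻¹ := by
    have : (4:ℝ)/375 * s⁻¹ = (4/375) / s := by ring
    rw [this, le_div_iff₀ hs0]
    nlinarith
  have hexp6 : Real.exp (-6) ≤ 1/400 := by
    rw [Real.exp_neg]
    have := inv_anti₀ (by norm_num : (0:ℝ) < 400) exp_six_ge'
    linarith
  -- assemble
  rw [habs]
  have hgoal_eq : 0.4 * (0.28 * ((2/7) / (3 * β ^ 2) *
      (s⁻¹ * E))) = (4/375) * s⁻¹ * ((1/β^2) * E) := by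
    field_simp
    ring
  rw [hgoal_eq]
  calc Real.exp (-14 * X23) ≤ Real.exp (-(β^2) - 6) := Real.exp_le_exp.mpr hexp_cmp
    _ = E * E * Real.exp (-6) := by
        rw [hEdef, ← Real.exp_add, ← Real.exp_add]; ring_nf
    _ ≤ (1/β^2) * E * (1/400) := by
        apply mul_le_mul _ hexp6 (Real.exp_pos _).le (by positivity)
        exact mul_le_mul_of_nonneg_right hEβ hE0.le
    _ ≤ (4/375) * s⁻¹ * ((1/β^2) * E) := by
        have hposE : 0 ≤ (1/β^2) * E := by positivity
        calc (1/β^2) * E * (1/400) ≤ (1/β^2) * E * ((4/375) * s⁻¹) :=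
              mul_le_mul_of_nonneg_left hsinv hposE
          _ = (4/375) * s⁻¹ * ((1/β^2) * E) := by ring

end AuxLemmas


lemma f_mono {y s : ℝ} (hy : 1 < y) (hys : y ≤ s) :
    Real.exp (-1 / (y ^ 2 - 1)) ≤ Real.exp (-1 / (s ^ 2 - 1)) := by
  apply Real.exp_le_exp.mpr
  have h1 : 0 < y ^ 2 - 1 := by nlinarith
  have h2 : 0 < s ^ 2 - 1 := by nlinarith
  rw [div_le_div_iff₀ h1 h2]
  nlinarith

lemma bdd_meas_intervalIntegrable {f : ℝ → ℝ} (hm : Measurable f) {c d C : ℝ} (hcd : c ≤ d)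
    (hb : ∀ s ∈ Set.Ioc c d, |f s| ≤ C) : IntervalIntegrable f volume c d := by
  rw [intervalIntegrable_iff_integrableOn_Ioc_of_le hcd]
  have hconst : IntegrableOn (fun _ : ℝ => C) (Set.Ioc c d) :=
    integrableOn_const measure_Ioc_lt_top.ne
  exact Integrable.mono' hconst hm.aestronglyMeasurable
    ((ae_restrict_iff' measurableSet_Ioc).mpr (ae_of_all _ hb))

/-- a counterexample to the rate of convergence of the Euler–Maruyama
method: `E[X₁(t)] − E[Y₁^h(t)] ≥ exp(−14·|ln h|^{2/3})` for all `h ∈ (0, 1/22]` and all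
`t ∈ [2,∞)`; in particular the weak error decays slower than any polynomial rate. -/
theorem euler_maruyama_converges_slower_than_any_polynomial_rate
    {Ω : Type*} [MeasurableSpace Ω] (P : Measure Ω) (W : ℝ → Ω → ℝ)
    (hW : IsStandardBrownianMotion P W) :
    (∀ h ∈ Set.Ioc (0:ℝ) (1 / 22), ∀ t ∈ Set.Ici (2:ℝ),
      Real.exp (-14 * |Real.log h| ^ ((2:ℝ)/3)) ≤ meanExactX1 t - meanEulerY1 P W h t) ∧
    (∀ α : ℝ, 0 < α → ∀ t ∈ Set.Ici (2:ℝ),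
      Tendsto (fun h : ℝ => (meanExactX1 t - meanEulerY1 P W h t) / h ^ α)
        (nhdsWithin 0 (Set.Ioi 0)) atTop) := by
  haveI := hW.isProbabilityMeasure
  have key : ∀ h ∈ Set.Ioc (0:ℝ) (1 / 22), ∀ t ∈ Set.Ici (2:ℝ),
      Real.exp (-14 * |Real.log h| ^ ((2:ℝ)/3)) ≤ meanExactX1 t - meanEulerY1 P W h t := by
    rintro h ⟨h0, h22⟩ t ht
    rw [Set.mem_Ici] at ht
    obtain ⟨halb, haub⟩ := eulerDefect_bounds h0 h22
    have ha0 : 0 < eulerDefect h := lt_of_lt_of_le (by positivity) halb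
    set a := eulerDefect h with hadef
    set f : ℝ → ℝ := fun s => Real.exp (-1 / (s ^ 2 - 1)) with hfdef
    set Φ : ℝ → ℝ := fun y =>
      Set.indicator (Set.Ioi (1:ℝ)) (fun y => Real.exp (-1 / (y ^ 2 - 1))) y *
        ∫ ω, Real.cos (a * Real.exp ((W y ω) ^ 3)) ∂P with hΦdef
    set G : ℝ → ℝ := fun s => Φ (gridFloor h s) with hGdef
    have hExact : meanExactX1 t = ∫ s in (1:ℝ)..t, f s := rfl
    have hEuler : meanEulerY1 P W h t = ∫ s in (1:ℝ)..t, G s := rfl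
    have hGΦ : ∀ s, G s = Φ (gridFloor h s) := fun _ => rfl
    clear_value a f Φ G
    -- bounds on the factors of Φ
    have hind_bound : ∀ y : ℝ,
        0 ≤ Set.indicator (Set.Ioi (1:ℝ)) (fun y => Real.exp (-1 / (y ^ 2 - 1))) y ∧
        Set.indicator (Set.Ioi (1:ℝ)) (fun y => Real.exp (-1 / (y ^ 2 - 1))) y ≤ 1 := by
      intro y
      by_cases hy : y ∈ Set.Ioi (1:ℝ)
      · rw [Set.indicator_of_mem hy]
        refine ⟨(Real.exp_pos _).le, Real.exp_le_one_iff.mpr ?_⟩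
        have : (0:ℝ) < y ^ 2 - 1 := by
          have := Set.mem_Ioi.mp hy; nlinarith
        rw [neg_div]
        simp only [Left.neg_nonpos_iff]
        positivity
      · rw [Set.indicator_of_notMem hy]; norm_num
    have hcos_bound : ∀ y : ℝ, |∫ ω, Real.cos (a * Real.exp ((W y ω) ^ 3)) ∂P| ≤ 1 := by
      intro y
      have hnorm := norm_integral_le_of_norm_le_const (μ := P)
        (f := fun ω => Real.cos (a * Real.exp ((W y ω) ^ 3))) (C := 1)
        (ae_of_all _ fun ω => by rw [Real.norm_eq_abs]; exact Real.abs_cos_le_one _)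
      rw [Real.norm_eq_abs] at hnorm
      simpa [measure_univ] using hnorm
    have hΦ_bound : ∀ y, |Φ y| ≤ 1 := by
      intro y
      rw [hΦdef, abs_mul]
      obtain ⟨hi0, hi1⟩ := hind_bound y
      calc |Set.indicator (Set.Ioi (1:ℝ)) (fun y => Real.exp (-1 / (y ^ 2 - 1))) y| *
            |∫ ω, Real.cos (a * Real.exp ((W y ω) ^ 3)) ∂P| ≤ 1 * 1 := by
            apply mul_le_mul _ (hcos_bound y) (abs_nonneg _) (by norm_num)
            rw [abs_of_nonneg hi0]; exact hi1
        _ = 1 := by norm_num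
    have hf_bound : ∀ s ∈ Set.Ioc (1:ℝ) t, |f s| ≤ 1 := by
      intro s hs
      rw [hfdef, abs_of_nonneg (Real.exp_pos _).le]
      apply Real.exp_le_one_iff.mpr
      have : (0:ℝ) < s ^ 2 - 1 := by have := hs.1; nlinarith
      rw [neg_div]
      simp only [Left.neg_nonpos_iff]
      positivity
    have hf_bound' : ∀ s ∈ Set.Ioc (1.6:ℝ) 2, |f s| ≤ 1 := by
      intro s hs
      rw [hfdef, abs_of_nonneg (Real.exp_pos _).le]
      apply Real.exp_le_one_iff.mpr
      have : (0:ℝ) < s ^ 2 - 1 := by have := hs.1; nlinarith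
      rw [neg_div]
      simp only [Left.neg_nonpos_iff]
      positivity
    have hf_meas : Measurable f := by
      rw [hfdef]
      exact Real.measurable_exp.comp
        (measurable_const.div ((measurable_id.pow_const 2).sub_const 1))
    have hG_meas : Measurable G := by
      rw [hGdef]
      exact measurable_comp_gridFloor Φ
    have h1t : (1:ℝ) ≤ t := by linarith
    have hfi : IntervalIntegrable f volume 1 t := bdd_meas_intervalIntegrable hf_meas h1t hf_bound
    have hfi' : IntervalIntegrable f volume 1.6 2 :=
      bdd_meas_intervalIntegrable hf_meas (by norm_num) hf_bound'
    have hG_bound : ∀ s : ℝ, |G s| ≤ 1 := fun s => by rw [hGΦ s]; exact hΦ_bound _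
    have hGi : IntervalIntegrable G volume 1 t :=
      bdd_meas_intervalIntegrable hG_meas h1t (fun s _ => hG_bound s)
    have hGi' : IntervalIntegrable G volume 1.6 2 :=
      bdd_meas_intervalIntegrable hG_meas (by norm_num) (fun s _ => hG_bound s)
    -- G ≤ f for s > 1
    have hGf : ∀ s : ℝ, 1 < s → G s ≤ f s := by
      intro s hs
      have hGs : G s = Φ (gridFloor h s) := hGΦ s
      rw [hGs, hΦdef]
      beta_reduce
      by_cases hτ : gridFloor h s ∈ Set.Ioi (1:ℝ)
      · rw [Set.indicator_of_mem hτ]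
        have hτs : gridFloor h s ≤ s := gridFloor_le h0 (by linarith)
        have hgle : Real.exp (-1 / ((gridFloor h s) ^ 2 - 1)) ≤ f s := by
          rw [hfdef]; exact f_mono (Set.mem_Ioi.mp hτ) hτs
        have hcle := (abs_le.mp (hcos_bound (gridFloor h s))).2
        calc Real.exp (-1 / ((gridFloor h s) ^ 2 - 1)) *
              ∫ ω, Real.cos (a * Real.exp ((W (gridFloor h s) ω) ^ 3)) ∂P
            ≤ Real.exp (-1 / ((gridFloor h s) ^ 2 - 1)) * 1 :=
              mul_le_mul_of_nonneg_left hcle (Real.exp_pos _).le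
          _ ≤ f s := by rw [mul_one]; exact hgle
      · rw [Set.indicator_of_notMem hτ, zero_mul, hfdef]
        exact (Real.exp_pos _).le
    -- the uniform positive lower bound
    set Q : ℝ := (2/7) / (3 * (Real.log (7*π/(2*a)) ^ ((1:ℝ)/3)) ^ 2) * ((Real.sqrt (4*π))⁻¹ *
      Real.exp (-((Real.log (7*π/(2*a)) ^ ((1:ℝ)/3)) ^ 2) / 2)) with hQdef
    clear_value Q
    have hQ0 : 0 ≤ Q := by
      rw [hQdef]
      have h1 : (0:ℝ) ≤ (2/7) / (3 * (Real.log (7*π/(2*a)) ^ ((1:ℝ)/3)) ^ 2) := by positivity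
      have h2 : (0:ℝ) ≤ (Real.sqrt (4*π))⁻¹ *
          Real.exp (-((Real.log (7*π/(2*a)) ^ ((1:ℝ)/3)) ^ 2) / 2) := by positivity
      exact mul_nonneg h1 h2
    have hpoint : ∀ s ∈ Set.Icc (1.6:ℝ) 2, 0.28 * Q ≤ f s - G s := by
      intro s hs
      obtain ⟨hs1, hs2⟩ := hs
      have hτs : gridFloor h s ≤ s := gridFloor_le h0 (by linarith)
      have hτlb : (1.55:ℝ) ≤ gridFloor h s := by
        have := lt_gridFloor_add (t := s) h0
        linarith
      have hτmem : gridFloor h s ∈ Set.Ioi (1:ℝ) := Set.mem_Ioi.mpr (by linarith)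
      have hGs : G s = Real.exp (-1 / ((gridFloor h s) ^ 2 - 1)) *
          ∫ ω, Real.cos (a * Real.exp ((W (gridFloor h s) ω) ^ 3)) ∂P := by
        rw [hGΦ s, hΦdef]
        beta_reduce
        rw [Set.indicator_of_mem hτmem]
      have hq := one_sub_cos_bound P W hW (τ := gridFloor h s) (a := a)
        (by linarith) (by linarith) ha0 haub
      rw [← hQdef] at hq
      have hgl : (0.28:ℝ) ≤ Real.exp (-1 / ((gridFloor h s) ^ 2 - 1)) := by
        have hpos : (0:ℝ) < (gridFloor h s) ^ 2 - 1 := by nlinarith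
        have h72 : -(0.72:ℝ) ≤ -1 / ((gridFloor h s) ^ 2 - 1) := by
          rw [neg_div, neg_le_neg_iff, div_le_iff₀ hpos]
          nlinarith
        have := Real.add_one_le_exp (-1 / ((gridFloor h s) ^ 2 - 1))
        linarith
      have hfg : Real.exp (-1 / ((gridFloor h s) ^ 2 - 1)) ≤ f s := by
        rw [hfdef]; exact f_mono (by linarith) hτs
      have hcle := (abs_le.mp (hcos_bound (gridFloor h s))).2
      rw [hGs]
      set c := ∫ ω, Real.cos (a * Real.exp ((W (gridFloor h s) ω) ^ 3)) ∂P with hcdef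
      set g := Real.exp (-1 / ((gridFloor h s) ^ 2 - 1)) with hgdef
      clear_value c g
      have e1 : 0.28 * (1 - c) ≤ g * (1 - c) :=
        mul_le_mul_of_nonneg_right hgl (by linarith)
      have e2 : 0.28 * Q ≤ 0.28 * (1 - c) := by
        apply mul_le_mul_of_nonneg_left _ (by norm_num)
        linarith
      have e3 : g * (1 - c) = g - g * c := by ring
      linarith only [e1, e2, e3, hfg]
    -- putting everything together
    have hmono1 : (∫ s in (1.6:ℝ)..2, (f s - G s)) ≤ ∫ s in (1:ℝ)..t, (f s - G s) := by
      apply intervalIntegral.integral_mono_interval (by norm_num) (by norm_num) ht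
      · refine ae_restrict_of_forall_mem measurableSet_Ioc fun s hs => ?_
        simp only [Pi.zero_apply]
        have := hGf s hs.1
        linarith
      · exact hfi.sub hGi
    have hmono2 : (∫ _ in (1.6:ℝ)..2, (0.28 * Q)) ≤ ∫ s in (1.6:ℝ)..2, (f s - G s) :=
      intervalIntegral.integral_mono_on (by norm_num) intervalIntegrable_const
        (hfi'.sub hGi') hpoint
    have hconstI : (∫ _ in (1.6:ℝ)..2, (0.28 * Q)) = 0.4 * (0.28 * Q) := by
      rw [intervalIntegral.integral_const, smul_eq_mul]
      norm_num
    have hsub : (∫ s in (1:ℝ)..t, f s) - (∫ s in (1:ℝ)..t, G s) =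
        ∫ s in (1:ℝ)..t, (f s - G s) := (intervalIntegral.integral_sub hfi hGi).symm
    have hfinal := final_numeric h0 h22 halb haub
    rw [← hQdef] at hfinal
    rw [hExact, hEuler, hsub]
    calc Real.exp (-14 * |Real.log h| ^ ((2:ℝ)/3)) ≤ 0.4 * (0.28 * Q) := hfinal
      _ = ∫ _ in (1.6:ℝ)..2, (0.28 * Q) := hconstI.symm
      _ ≤ ∫ s in (1.6:ℝ)..2, (f s - G s) := hmono2
      _ ≤ ∫ s in (1:ℝ)..t, (f s - G s) := hmono1
  refine ⟨key, fun α hα t ht => ?_⟩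
  have hbound : ∀ᶠ h in nhdsWithin (0:ℝ) (Set.Ioi 0),
      Real.exp (-14 * |Real.log h| ^ ((2:ℝ)/3)) / h ^ α ≤
        (meanExactX1 t - meanEulerY1 P W h t) / h ^ α := by
    have hmem : Set.Ioc (0:ℝ) (1/22) ∈ nhdsWithin (0:ℝ) (Set.Ioi 0) :=
      Ioc_mem_nhdsGT_of_mem (by norm_num : (0:ℝ) ∈ Set.Ico (0:ℝ) (1/22))
    filter_upwards [hmem] with h hh
    have hkey := key h hh t ht
    have hpow : (0:ℝ) < h ^ α := Real.rpow_pos_of_pos hh.1 α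
    exact div_le_div_of_nonneg_right hkey hpow.le
  refine tendsto_atTop_mono' _ hbound ?_
  have hXtend : Tendsto (fun h : ℝ => -Real.log h) (nhdsWithin (0:ℝ) (Set.Ioi 0)) atTop :=
    tendsto_neg_atBot_atTop.comp Real.tendsto_log_nhdsGT_zero
  have hg : Tendsto (fun X : ℝ => α * X - 14 * X ^ ((2:ℝ)/3)) atTop atTop := by
    apply tendsto_atTop_mono' atTop ?_ ((tendsto_id.const_mul_atTop
      (by positivity : (0:ℝ) < α/2)) : Tendsto (fun X : ℝ => (α/2) * X) atTop atTop)
    filter_upwards [eventually_ge_atTop (max 1 ((28/α)^(3:ℕ)))] with X hX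
    have hX1 : (1:ℝ) ≤ X := le_trans (le_max_left _ _) hX
    have hX2 : (28/α)^(3:ℕ) ≤ X := le_trans (le_max_right _ _) hX
    have hX0 : (0:ℝ) < X := by linarith
    have h28 : (0:ℝ) < 28/α := by positivity
    have h13 : 28/α ≤ X ^ ((1:ℝ)/3) := by
      calc 28/α = ((28/α)^(3:ℕ)) ^ ((1:ℝ)/3) := by
            rw [← Real.rpow_natCast (28/α) 3, ← Real.rpow_mul h28.le]
            norm_num
        _ ≤ X ^ ((1:ℝ)/3) := Real.rpow_le_rpow (by positivity) hX2 (by norm_num)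
    have hid : X ^ ((2:ℝ)/3) * X ^ ((1:ℝ)/3) = X := by
      rw [← Real.rpow_add hX0]
      norm_num
    have h230 : (0:ℝ) ≤ X ^ ((2:ℝ)/3) := Real.rpow_nonneg hX0.le _
    have hmul := mul_le_mul_of_nonneg_left h13
      (mul_nonneg (by positivity : (0:ℝ) ≤ α/2) h230)
    have hl : (α/2 * X ^ ((2:ℝ)/3)) * (28/α) = 14 * X ^ ((2:ℝ)/3) := by
      field_simp
      ring
    have hr : (α/2 * X ^ ((2:ℝ)/3)) * X ^ ((1:ℝ)/3) = (α/2) * X := by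
      rw [mul_assoc, hid]
    rw [hl, hr] at hmul
    show (α/2) * X ≤ α * X - 14 * X ^ ((2:ℝ)/3)
    linarith
  have hcomp : Tendsto
      (fun h : ℝ => Real.exp (α * (-Real.log h) - 14 * (-Real.log h) ^ ((2:ℝ)/3)))
      (nhdsWithin (0:ℝ) (Set.Ioi 0)) atTop := (Real.tendsto_exp_atTop.comp hg).comp hXtend
  refine Tendsto.congr' ?_ hcomp
  have hmem1 : Set.Ioo (0:ℝ) 1 ∈ nhdsWithin (0:ℝ) (Set.Ioi 0) :=
    Ioo_mem_nhdsGT_of_mem (by norm_num : (0:ℝ) ∈ Set.Ico (0:ℝ) 1)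
  filter_upwards [hmem1] with h hh
  have h0 : 0 < h := hh.1
  have hlneg : Real.log h < 0 := Real.log_neg h0 hh.2
  rw [abs_of_neg hlneg, Real.rpow_def_of_pos h0, ← Real.exp_sub]
  exact congrArg Real.exp (by ring)
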